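/- Let L : ℝ^d → (0,∞) be measurable with ∫_{ℝ^d} L(t) dt = 1, and let η > 0. Then ∫_{ℝ^d} L(s) / ( η^d Σ_{t∈ηℤ^d} L(t+s) ) ds = 1, where the integrand is interpreted as 0 at points s where the sum Σ_{t∈ηℤ^d} L(t+s) is infinite. -/

import Mathlib

set_option synthInstance.maxHeartbeats 1000000
set_option maxHeartbeats 1000000
open MeasureTheory ENNReal Filter Set Topology

/-- for a measurable, strictly positive `L : ℝ^d → (0,∞)` with
`∫_{ℝ^d} L = 1` and `η > 0`, one has
`∫_{ℝ^d} L(s) / (η^d ∑_{t ∈ ηℤ^d} L(t+s)) ds = 1`, the integrand being `0`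
where the sum is infinite (convention of `ℝ≥0∞` division). -/
theorem lattice_average_integral_eq_one
    (d : ℕ) (hd : 0 < d) (L : (Fin d → ℝ) → ℝ)
    (hmeas : Measurable L)
    (hpos : ∀ t, 0 < L t)
    (hint : ∫⁻ t : Fin d → ℝ, ENNReal.ofReal (L t) = 1)
    (η : ℝ) (hη : 0 < η) :
    ∫⁻ s : Fin d → ℝ, ENNReal.ofReal (L s) /
      (ENNReal.ofReal (η ^ d) *
        ∑' k : Fin d → ℤ, ENNReal.ofReal (L ((fun i => η * k i) + s))) = 1 := by
  classical
  set c : ℝ≥0∞ := ENNReal.ofReal (η ^ d) with hc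
  have hc0 : c ≠ 0 := by
    simp only [hc, ne_eq, ENNReal.ofReal_eq_zero, not_le]
    exact pow_pos hη d
  have hctop : c ≠ ∞ := ENNReal.ofReal_ne_top
  set S : (Fin d → ℝ) → ℝ≥0∞ :=
    fun s => ∑' k : Fin d → ℤ, ENNReal.ofReal (L ((fun i => η * k i) + s)) with hSdef
  -- the scaled standard basis
  let b : Module.Basis (Fin d) ℝ (Fin d → ℝ) :=
    (Pi.basisFun ℝ (Fin d)).unitsSMul (fun _ => Units.mk0 η hη.ne')
  have hbapp : ∀ i, b i = Pi.single i η := by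
    intro i
    rw [Module.Basis.unitsSMul_apply]
    ext j
    simp [Pi.single_apply]
  set D : Set (Fin d → ℝ) := ZSpan.fundamentalDomain b with hDdef
  set G := Submodule.span ℤ (Set.range ⇑b) with hGdef
  let bz : Module.Basis (Fin d) ℤ G := b.restrictScalars ℤ
  let ψ : (Fin d → ℤ) ≃ G := bz.equivFun.symm.toEquiv
  have hψ : ∀ k : Fin d → ℤ, ((ψ k : G) : Fin d → ℝ) = fun i => η * k i := by
    intro k
    have h1 : (ψ k : G) = ∑ i, k i • bz i := by
      simp [ψ, Module.Basis.equivFun_symm_apply]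
    rw [h1]
    funext j
    have h2 : ((∑ i, k i • bz i : G) : Fin d → ℝ) j = ∑ i, ((k i • bz i : G) : Fin d → ℝ) j := by
      rw [AddSubmonoidClass.coe_finset_sum, Finset.sum_apply]
    rw [h2]
    have h3 : ∀ i, ((k i • bz i : G) : Fin d → ℝ) j = (k i : ℝ) * (Pi.single i η : Fin d → ℝ) j := by
      intro i
      have : ((k i • bz i : G) : Fin d → ℝ) = k i • (bz i : Fin d → ℝ) := rfl
      rw [this, Module.Basis.restrictScalars_apply, hbapp i]
      simp [zsmul_eq_mul]
    simp_rw [h3, Pi.single_apply]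
    simp [Finset.sum_ite_eq', mul_comm]
  haveI : MeasurableVAdd (↥G) (Fin d → ℝ) :=
    { measurable_const_vadd := fun c => show Measurable fun x : Fin d → ℝ => (c : Fin d → ℝ) + x from
        measurable_const.add measurable_id,
      measurable_vadd_const := fun x => show Measurable fun c : ↥G => (c : Fin d → ℝ) + x from
        measurable_subtype_coe.add_const x }
  haveI : VAddInvariantMeasure (↥G) (Fin d → ℝ) volume :=
    ⟨fun c s hs => by
      show volume ((fun x : Fin d → ℝ => (c : Fin d → ℝ) + x) ⁻¹' s) = volume s
      exact measure_preimage_add volume _ s⟩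
  have hfund := ZSpan.isAddFundamentalDomain b volume
  have key : ∀ f : (Fin d → ℝ) → ℝ≥0∞,
      ∫⁻ x, f x = ∑' k : Fin d → ℤ, ∫⁻ x in D, f ((fun i => η * k i) + x) := by
    intro f
    rw [hfund.lintegral_eq_tsum'' f, ← ψ.tsum_eq]
    refine tsum_congr fun k => ?_
    refine lintegral_congr fun x => ?_
    congr 1
    rw [← hψ k]
    rfl
  -- periodicity of S
  have hSper : ∀ (k : Fin d → ℤ) (s : Fin d → ℝ), S ((fun i => η * k i) + s) = S s := by
    intro k s
    rw [hSdef]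
    simp only
    rw [← (Equiv.subRight k).tsum_eq]
    refine tsum_congr fun k' => ?_
    congr 2
    funext i
    simp only [Equiv.subRight_apply, Pi.add_apply, Pi.sub_apply]
    push_cast
    ring
  -- measurability
  have hfm : ∀ k : Fin d → ℤ,
      Measurable fun s => ENNReal.ofReal (L ((fun i => η * k i) + s)) := fun k =>
    ENNReal.measurable_ofReal.comp (hmeas.comp (measurable_const.add measurable_id))
  have hSm : Measurable S := by
    rw [hSdef]
    exact Measurable.ennreal_tsum fun k => hfm k
  have hS0 : ∀ s, S s ≠ 0 := by
    intro s
    rw [hSdef]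
    simp only [ne_eq, ENNReal.tsum_eq_zero, not_forall]
    exact ⟨0, ne_of_gt (ENNReal.ofReal_pos.mpr (hpos _))⟩
  have hD1 : ∫⁻ s in D, S s = 1 := by
    calc ∫⁻ s in D, S s
        = ∑' k : Fin d → ℤ, ∫⁻ s in D, ENNReal.ofReal (L ((fun i => η * k i) + s)) := by
          rw [hSdef]; exact lintegral_tsum fun k => (hfm k).aemeasurable
      _ = ∫⁻ t, ENNReal.ofReal (L t) := (key (fun t => ENNReal.ofReal (L t))).symm
      _ = 1 := hint
  have hae : ∀ᵐ s ∂(volume.restrict D), S s < ∞ :=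
    ae_lt_top hSm (by rw [hD1]; exact one_ne_top)
  have hvolD : volume D = c := by
    rw [hDdef, ZSpan.volume_fundamentalDomain]
    have hm : (Matrix.of ⇑b) = Matrix.diagonal (fun _ => η) := by
      ext i j
      rw [Matrix.of_apply, hbapp i]
      simp [Matrix.diagonal, Pi.single_apply, eq_comm]
    rw [hm, Matrix.det_diagonal, Finset.prod_const, Finset.card_fin,
      abs_of_pos (pow_pos hη d), hc]
  calc ∫⁻ s, ENNReal.ofReal (L s) / (c * S s)
      = ∑' k : Fin d → ℤ, ∫⁻ s in D,
          ENNReal.ofReal (L ((fun i => η * k i) + s)) / (c * S ((fun i => η * k i) + s)) :=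
        key _
    _ = ∑' k : Fin d → ℤ, ∫⁻ s in D,
          ENNReal.ofReal (L ((fun i => η * k i) + s)) / (c * S s) := by
        refine tsum_congr fun k => ?_
        refine lintegral_congr fun s => ?_
        rw [hSper]
    _ = ∫⁻ s in D, ∑' k : Fin d → ℤ,
          ENNReal.ofReal (L ((fun i => η * k i) + s)) / (c * S s) :=
        (lintegral_tsum fun k => ((hfm k).div (measurable_const.mul hSm)).aemeasurable).symm
    _ = ∫⁻ s in D, S s / (c * S s) := by
        refine lintegral_congr fun s => ?_
        simp_rw [div_eq_mul_inv]
        rw [ENNReal.tsum_mul_right, hSdef]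
    _ = ∫⁻ s in D, c⁻¹ := by
        refine lintegral_congr_ae ?_
        filter_upwards [hae] with s hs
        rw [div_eq_mul_inv, ENNReal.mul_inv (Or.inl hc0) (Or.inl hctop), ← mul_assoc,
          mul_comm (S s) c⁻¹, mul_assoc, ENNReal.mul_inv_cancel (hS0 s) hs.ne, mul_one]
    _ = c⁻¹ * volume D := setLIntegral_const D c⁻¹
    _ = 1 := by rw [hvolD]; exact ENNReal.inv_mul_cancel hc0 hctop
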